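/- The morphism φ is an overlap-free morphism: for every finite word w over ℕ, if w is overlap-free then φ(w) is overlap-free. -/

import Mathlib

/-- S⁻¹: move the last letter of a nonempty word to the front. -/
def sInv (w : List ℕ) : List ℕ := w.rotate (w.length - 1)

/-- Apply a substitution `f` letterwise to a word (the morphism determined by `f`). -/
def applyM (f : ℕ → List ℕ) (w : List ℕ) : List ℕ := (w.map f).flatten

/-- Fuel-indexed approximation of the morphism φ: `phiAux n` agrees with φ on all
letters `c < n`.  (Computing φ^c(00) only uses φ on letters smaller than `c`, so the
recursion is well-founded in the fuel.) -/
def phiAux : ℕ → ℕ → List ℕ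
  | 0, _ => []
  | n + 1, c => sInv ((applyM (phiAux n))^[c] [0, 0]) ++ [c + 1]

/-- The morphism φ on letters: φ(h) = S⁻¹(φ^h(00))·(h+1).
In particular φ(0) = 001 and φ(1) = 1001002. -/
def phi (c : ℕ) : List ℕ := phiAux (c + 1) c

/-- The morphism φ on words. -/
def phiW (w : List ℕ) : List ℕ := applyM phi w

/-- A word over ℕ is overlap-free if it has no factor of the form a·x·a·x·a with
`a` a letter and `x` a (possibly empty) word. -/
def OverlapFree (w : List ℕ) : Prop :=
  ∀ (a : ℕ) (x : List ℕ), ¬ ([a] ++ x ++ [a] ++ x ++ [a]) <:+: w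
namespace PhiOF
open List

def F (c : ℕ) : List ℕ := (applyM phi)^[c] [0, 0]
def Y (c : ℕ) : List ℕ := (F c).dropLast

lemma applyM_append (f : ℕ → List ℕ) (u v : List ℕ) :
    applyM f (u ++ v) = applyM f u ++ applyM f v := by
  simp [applyM]

lemma applyM_congr {f g : ℕ → List ℕ} {u : List ℕ} (h : ∀ b ∈ u, f b = g b) :
    applyM f u = applyM g u := by
  unfold applyM
  rw [List.map_congr_left h]

lemma phiW_append (u v : List ℕ) : phiW (u ++ v) = phiW u ++ phiW v := applyM_append _ _ _
lemma phiW_cons (b : ℕ) (u : List ℕ) : phiW (b :: u) = phi b ++ phiW u := by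
  simp [phiW, applyM]
@[simp] lemma phiW_nil : phiW [] = [] := rfl
lemma phiW_singleton (b : ℕ) : phiW [b] = phi b := by simp [phiW, applyM]

lemma getLast_eq_of_eq_append {l A : List ℕ} {a : ℕ} (h : l = A ++ [a]) (hne : l ≠ []) :
    l.getLast hne = a := by subst h; simp

lemma sInv_eq {l : List ℕ} (h : l ≠ []) : sInv l = l.getLast h :: l.dropLast := by
  conv_lhs => rw [sInv, ← List.dropLast_append_getLast h]
  have h2 : (l.dropLast ++ [l.getLast h]).length - 1 = l.dropLast.length := by simp
  rw [h2]
  have hlen : l.dropLast.length ≤ (l.dropLast ++ [l.getLast h]).length := by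
    simp
  rw [List.rotate_eq_drop_append_take hlen, List.drop_left, List.take_left]
  simp

lemma F_succ (c : ℕ) : F (c + 1) = phiW (F c) := Function.iterate_succ_apply' _ _ _

lemma main_facts : ∀ c : ℕ,
    (∀ n, c < n → phiAux n c = phi c) ∧ (∀ b ∈ F c, b ≤ c) ∧
    (∀ x ∈ phi c, x ≤ c + 1) ∧ (phi c = sInv (F c) ++ [c + 1]) := by
  intro c
  induction c using Nat.strong_induction_on with
  | _ c IH =>
  have ITER : ∀ j, j ≤ c → ∀ m, j ≤ m → (applyM (phiAux m))^[j] [0, 0] = F j := by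
    intro j
    induction j with
    | zero => intro _ m _; rfl
    | succ j ihj =>
      intro hjc m hm
      have hj : j < c := by omega
      rw [Function.iterate_succ_apply', ihj (by omega) m (by omega), F_succ]
      apply applyM_congr
      intro b hb
      have hbj : b ≤ j := (IH j hj).2.1 b hb
      exact (IH b (by omega)).1 m (by omega)
  have MAXF : ∀ b ∈ F c, b ≤ c := by
    cases c with
    | zero => intro b hb; simp [F] at hb; omega
    | succ k =>
      intro b hb
      rw [F_succ] at hb
      simp only [phiW, applyM, List.mem_flatten, List.mem_map] at hb
      obtain ⟨l, ⟨a, ha, rfl⟩, hbl⟩ := hb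
      have hak : a ≤ k := (IH k (by omega)).2.1 a ha
      have := (IH a (by omega)).2.2.1 b hbl
      omega
  have PHIEQ : phi c = sInv (F c) ++ [c + 1] := by
    show phiAux (c + 1) c = _
    rw [phiAux, ITER c le_rfl c le_rfl]
  refine ⟨?_, MAXF, ?_, PHIEQ⟩
  · intro n hn
    obtain ⟨n', rfl⟩ : ∃ n', n = n' + 1 := ⟨n - 1, by omega⟩
    show sInv ((applyM (phiAux n'))^[c] [0, 0]) ++ [c + 1] = phi c
    rw [ITER c le_rfl n' (by omega), PHIEQ]
  · intro x hx
    rw [PHIEQ] at hx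
    rcases List.mem_append.1 hx with h | h
    · have : x ∈ F c := by
        rw [sInv] at h
        exact List.mem_rotate.1 h
      have := MAXF x this
      omega
    · simp at h; omega

lemma F_alpha {c : ℕ} : ∀ b ∈ F c, b ≤ c := (main_facts c).2.1
lemma phi_alpha {c : ℕ} : ∀ x ∈ phi c, x ≤ c + 1 := (main_facts c).2.2.1

lemma FY : ∀ c, F c = Y c ++ [c] := by
  intro c
  induction c with
  | zero => rfl
  | succ c ih =>
    have hne : F c ≠ [] := by rw [ih]; simp
    have hlast : (F c).getLast hne = c := getLast_eq_of_eq_append ih hne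
    have hphi : phi c = c :: Y c ++ [c + 1] := by
      rw [(main_facts c).2.2.2, sInv_eq hne, hlast]; rfl
    have h1 : F (c + 1) = (phiW (Y c) ++ c :: Y c) ++ [c + 1] := by
      rw [F_succ, ih, phiW_append, phiW_singleton, hphi]
      simp
    have h2 : Y (c + 1) = phiW (Y c) ++ c :: Y c := by
      conv_lhs => rw [Y]
      rw [h1, List.dropLast_concat]
    rw [h1, h2]

lemma F_ne (c : ℕ) : F c ≠ [] := by rw [FY]; simp

lemma phi_eq (c : ℕ) : phi c = c :: (Y c ++ [c + 1]) := by
  have hne := F_ne c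
  have hlast : (F c).getLast hne = c := getLast_eq_of_eq_append (FY c) hne
  rw [(main_facts c).2.2.2, sInv_eq hne, hlast]; rfl

lemma Y_succ (c : ℕ) : Y (c + 1) = phiW (Y c) ++ c :: Y c := by
  have h1 : F (c + 1) = (phiW (Y c) ++ c :: Y c) ++ [c + 1] := by
    rw [F_succ, FY c, phiW_append, phiW_singleton, phi_eq]
    simp
  conv_lhs => rw [Y]
  rw [h1, List.dropLast_concat]

lemma Y_alpha {c : ℕ} : ∀ x ∈ Y c, x ≤ c := by
  intro x hx
  exact F_alpha x (List.dropLast_subset _ hx)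

lemma Y_ne (c : ℕ) : Y c ≠ [] := by
  cases c with
  | zero => simp [Y, F]
  | succ c => rw [Y_succ]; simp

lemma Y_eq0 (c : ℕ) : ∃ Z, Y c = Z ++ [0] := by
  induction c with
  | zero => exact ⟨[], by simp [Y, F]⟩
  | succ c ih =>
    obtain ⟨Z, hZ⟩ := ih
    exact ⟨phiW (Y c) ++ c :: Z, by rw [Y_succ, hZ]; simp⟩

lemma phi_ne (c : ℕ) : phi c ≠ [] := by rw [phi_eq]; simp

lemma phi_last2 (c : ℕ) : ∃ G, phi c = G ++ [0, c + 1] := by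
  obtain ⟨Z, hZ⟩ := Y_eq0 c
  refine ⟨c :: Z, ?_⟩
  rw [phi_eq, hZ]; simp

end PhiOF
namespace PhiOF
open List

/-! ### alphabet and count lemmas -/

lemma phiW_alpha {u : List ℕ} {n : ℕ} (h : ∀ b ∈ u, b ≤ n) : ∀ x ∈ phiW u, x ≤ n + 1 := by
  intro x hx
  simp only [phiW, applyM, List.mem_flatten, List.mem_map] at hx
  obtain ⟨l, ⟨a, ha, rfl⟩, hx⟩ := hx
  have h1 := phi_alpha x hx
  have h2 := h a ha
  omega

lemma phiW_ne {u : List ℕ} (h : u ≠ []) : phiW u ≠ [] := by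
  cases u with
  | nil => exact absurd rfl h
  | cons b u' =>
    rw [phiW_cons]
    have := phi_ne b
    intro hc
    simp only [List.append_eq_nil_iff] at hc
    exact this hc.1

lemma not_mem_phi_of_gt {b n : ℕ} (h : b < n) : (n + 1) ∉ phi b := by
  intro hc
  have := phi_alpha _ hc
  omega

lemma count_phi_top (c : ℕ) : (phi c).count (c + 1) = 1 := by
  rw [phi_eq]
  have h1 : (c + 1) ∉ c :: Y c := by
    intro hc
    rcases List.mem_cons.1 hc with h | h
    · omega
    · have := Y_alpha _ h; omega
  have : phi c = phi c := rfl
  calc ((c : ℕ) :: (Y c ++ [c + 1])).count (c + 1)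
      = ((c :: Y c) ++ [c + 1]).count (c + 1) := by simp
    _ = 1 := by
        rw [List.count_append, List.count_eq_zero.2 h1]
        simp

lemma count_phiW {u : List ℕ} {n : ℕ} (h : ∀ b ∈ u, b ≤ n) :
    (phiW u).count (n + 1) = u.count n := by
  induction u with
  | nil => rfl
  | cons b u' ih =>
    rw [phiW_cons, List.count_append, List.count_cons,
      ih (fun x hx => h x (List.mem_cons_of_mem _ hx))]
    have hb := h b List.mem_cons_self
    by_cases hbn : b = n
    · subst hbn
      rw [count_phi_top]
      simp
      omega
    · have : b < n := by omega
      rw [List.count_eq_zero.2 (not_mem_phi_of_gt this)]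
      simp [hbn]

lemma count_F (c : ℕ) : (F c).count c = 2 := by
  induction c with
  | zero => rfl
  | succ c ih =>
    rw [F_succ, count_phiW F_alpha, ih]

lemma count_Y (c : ℕ) : (Y c).count c = 1 := by
  have h := count_F c
  rw [FY c, List.count_append] at h
  simp at h
  omega

/-! ### generic list helpers -/

lemma exists_max : ∀ (l : List ℕ), l ≠ [] → ∃ K, K ∈ l ∧ ∀ y ∈ l, y ≤ K := by
  intro l
  induction l with
  | nil => intro h; exact absurd rfl h
  | cons b l' ih =>
    intro _
    rcases eq_or_ne l' [] with rfl | hne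
    · exact ⟨b, by simp, by simp⟩
    · obtain ⟨K, hK1, hK2⟩ := ih hne
      rcases le_total b K with h | h
      · exact ⟨K, List.mem_cons_of_mem _ hK1, by
          intro y hy
          rcases List.mem_cons.1 hy with rfl | hy
          · exact h
          · exact hK2 y hy⟩
      · exact ⟨b, List.mem_cons_self, by
          intro y hy
          rcases List.mem_cons.1 hy with rfl | hy
          · exact le_rfl
          · exact (hK2 y hy).trans h⟩

lemma unique_match {A B C D : List ℕ} {k : ℕ} (h : A ++ k :: B = C ++ k :: D)
    (hA : k ∉ A) (hC : k ∉ C) : A = C ∧ B = D := by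
  rcases List.append_eq_append_iff.1 h with ⟨a', ha1, ha2⟩ | ⟨c', hc1, hc2⟩
  · cases a' with
    | nil => simp at ha1 ha2; exact ⟨ha1.symm, ha2⟩
    | cons x t =>
      exfalso
      have hx : k = x := by
        have : k :: B = x :: (t ++ k :: D) := by simpa using ha2
        exact (List.cons.injEq _ _ _ _ ▸ this).1
      apply hC
      rw [ha1, ← hx]
      simp
  · cases c' with
    | nil => simp at hc1 hc2; exact ⟨hc1, hc2.symm⟩
    | cons x t =>
      exfalso
      have hx : k = x := by
        have : k :: D = x :: (t ++ k :: B) := by simpa using hc2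
        exact (List.cons.injEq _ _ _ _ ▸ this).1
      apply hA
      rw [hc1, ← hx]
      simp

lemma count_one_split {l : List ℕ} {k : ℕ} (h : l.count k = 1) :
    ∃ A B, l = A ++ k :: B ∧ k ∉ A ∧ k ∉ B := by
  have hk : k ∈ l := List.count_pos_iff.1 (by omega)
  obtain ⟨A, B, rfl⟩ := List.append_of_mem hk
  rw [List.count_append, List.count_cons] at h
  simp at h
  refine ⟨A, B, rfl, ?_, ?_⟩
  · rw [← List.count_eq_zero]; omega
  · rw [← List.count_eq_zero]; omega

lemma count_split_zero {A B : List ℕ} {k : ℕ} {W : List ℕ} (hW : W = A ++ k :: B)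
    (h1 : W.count k = 1) : k ∉ A ∧ k ∉ B := by
  rw [hW, List.count_append, List.count_cons] at h1
  simp at h1
  constructor
  · rw [← List.count_eq_zero]; omega
  · rw [← List.count_eq_zero]; omega

lemma split_mid {L O R P S : List ℕ} {k : ℕ} (h : L ++ O ++ R = P ++ k :: S)
    (h1 : L.length ≤ P.length) (h2 : R.length ≤ S.length) :
    ∃ c d, O = c ++ k :: d ∧ P = L ++ c ∧ S = d ++ R := by
  have hLfull : L <+: (P ++ k :: S) := by
    rw [← h, List.append_assoc]
    exact List.prefix_append _ _
  have hLp : L <+: P := List.prefix_of_prefix_length_le hLfull (List.prefix_append _ _) h1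
  obtain ⟨c, rfl⟩ := hLp
  rw [List.append_assoc, List.append_assoc] at h
  have h3 : O ++ R = c ++ (k :: S) := List.append_cancel_left h
  have hlen : c.length < O.length := by
    have := congrArg List.length h3
    simp at this
    omega
  have hcfull : c <+: (O ++ R) := by
    rw [h3]; exact List.prefix_append _ _
  have hcO : c <+: O := List.prefix_of_prefix_length_le hcfull (List.prefix_append _ _) (le_of_lt hlen)
  obtain ⟨O', rfl⟩ := hcO
  rw [List.append_assoc] at h3
  have h4 : O' ++ R = k :: S := List.append_cancel_left h3
  cases O' with
  | nil => simp at hlen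
  | cons x d =>
    have h5 : x :: (d ++ R) = k :: S := by simpa using h4
    have hx : x = k := (List.cons.injEq _ _ _ _ ▸ h5).1
    have hS : S = d ++ R := ((List.cons.injEq _ _ _ _ ▸ h5).2).symm
    exact ⟨c, d, by rw [hx], rfl, hS⟩

lemma ends_eq {A B : List ℕ} {x y : ℕ} (h : A ++ [x] = B ++ [y]) : x = y := by
  have := (List.append_inj' h (by simp)).2
  simpa using this

end PhiOF
namespace PhiOF
open List

/-! ### suffix/prefix splitting helpers -/

lemma suffix_split {s A B : List ℕ} (h : s <:+ A ++ B) (hl : B.length ≤ s.length) :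
    ∃ s₁, s = s₁ ++ B ∧ s₁ <:+ A := by
  obtain ⟨t, ht⟩ := h
  have hs : s = s.take (s.length - B.length) ++ s.drop (s.length - B.length) :=
    (List.take_append_drop _ _).symm
  have hlen2 : (s.drop (s.length - B.length)).length = B.length := by
    rw [List.length_drop]
    omega
  rw [hs, ← List.append_assoc] at ht
  obtain ⟨h1, h2⟩ := List.append_inj' ht hlen2
  refine ⟨s.take (s.length - B.length), ?_, ⟨t, h1⟩⟩
  conv_lhs => rw [hs]
  rw [h2]

lemma prefix_split {s A B : List ℕ} (h : s <+: A ++ B) (hl : A.length ≤ s.length) :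
    ∃ s₁, s = A ++ s₁ ∧ s₁ <+: B := by
  obtain ⟨t, ht⟩ := h
  have hs : s = s.take A.length ++ s.drop A.length := (List.take_append_drop _ _).symm
  have hlen2 : (s.take A.length).length = A.length := by
    rw [List.length_take]
    omega
  rw [hs, List.append_assoc] at ht
  obtain ⟨h1, h2⟩ := List.append_inj ht hlen2
  refine ⟨s.drop A.length, ?_, ⟨t, h2⟩⟩
  conv_lhs => rw [hs]
  rw [h1]

lemma suffix_concat_ne {s A : List ℕ} {a : ℕ} (h : s <:+ A ++ [a]) (hs : s ≠ []) :
    ∃ s₀, s = s₀ ++ [a] ∧ s₀ <:+ A := by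
  apply suffix_split h
  simp
  exact List.length_pos_of_ne_nil hs

lemma prefix_cons_ne {s A : List ℕ} {a : ℕ} (h : s <+: a :: A) (hs : s ≠ []) :
    ∃ s₀, s = a :: s₀ ∧ s₀ <+: A := by
  have : s <+: [a] ++ A := by simpa using h
  obtain ⟨s₁, h1, h2⟩ := prefix_split this (by
    simp
    exact List.length_pos_of_ne_nil hs)
  exact ⟨s₁, by simpa using h1, h2⟩

/-! ### shape of phiW -/

lemma phiW_concat (u : List ℕ) (b : ℕ) :
    phiW (u ++ [b]) = (phiW u ++ (b :: Y b)) ++ [b + 1] := by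
  rw [phiW_append, phiW_singleton, phi_eq]
  simp

lemma phiW_last_succ {u : List ℕ} (h : u ≠ []) : ∃ W b, phiW u = W ++ [b + 1] := by
  rcases List.eq_nil_or_concat u with rfl | ⟨U, c, rfl⟩
  · exact absurd rfl h
  · exact ⟨phiW U ++ (c :: Y c), c, by rw [List.concat_eq_append, phiW_concat]⟩

lemma phiW_not_ends_zero {u Z : List ℕ} (h : u ≠ []) (he : phiW u = Z ++ [0]) : False := by
  obtain ⟨W, b, hW⟩ := phiW_last_succ h
  have : (0 : ℕ) = b + 1 := ends_eq (he ▸ hW)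
  omega

lemma phiW_head_cons (b : ℕ) (u : List ℕ) :
    phiW (b :: u) = b :: (Y b ++ [b + 1] ++ phiW u) := by
  rw [phiW_cons, phi_eq]
  simp

/-! ### synchronization lemmas -/

lemma sync {n : ℕ} : ∀ {w G H : List ℕ}, (∀ c ∈ w, c ≤ n) →
    phiW w = G ++ (n + 1) :: H →
    ∃ u₁ u₂, w = u₁ ++ n :: u₂ ∧ G = phiW u₁ ++ n :: Y n ∧ H = phiW u₂ := by
  intro w
  induction w with
  | nil =>
    intro G H _ h
    exfalso
    have := congrArg List.length h
    simp at this
  | cons b w' ih =>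
    intro G H halpha h
    rw [phiW_cons] at h
    rcases List.append_eq_append_iff.1 h with ⟨a', ha1, ha2⟩ | ⟨c', hc1, hc2⟩
    · obtain ⟨u₁, u₂, hw', hG, hH⟩ := ih (fun c hc => halpha c (List.mem_cons_of_mem _ hc)) ha2
      refine ⟨b :: u₁, u₂, by rw [hw']; rfl, ?_, hH⟩
      rw [ha1, hG, phiW_cons, List.append_assoc]
    · cases c' with
      | nil =>
        exfalso
        simp at hc2
        cases w' with
        | nil => simp at hc2
        | cons b' w'' =>
          rw [phiW_head_cons] at hc2
          have hb' : b' = n + 1 := ((List.cons.injEq _ _ _ _ ▸ hc2).1).symm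
          have := halpha b' (by simp)
          omega
      | cons x t =>
        have hx : x = n + 1 := by
          have : (n + 1) :: H = x :: (t ++ phiW w') := by simpa using hc2
          exact ((List.cons.injEq _ _ _ _ ▸ this).1).symm
        subst hx
        have hH : H = t ++ phiW w' := by
          have : (n + 1) :: H = (n + 1) :: (t ++ phiW w') := by simpa using hc2
          exact (List.cons.injEq _ _ _ _ ▸ this).2
        have hb : b = n := by
          have h1 : (n + 1) ∈ phi b := by rw [hc1]; simp
          have h2 := phi_alpha _ h1
          have h3 := halpha b (by simp)
          omega
        subst hb
        -- phi b = G ++ (b+1) :: t  and phi b = (b :: Y b) ++ (b+1) :: []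
        have hshape : G ++ (b + 1) :: t = (b :: Y b) ++ (b + 1) :: [] := by
          rw [← hc1, phi_eq]
          simp
        have hcount := count_split_zero hc1 (count_phi_top b)
        have hnotmem : (b + 1) ∉ (b :: Y b) := by
          intro hc
          rcases List.mem_cons.1 hc with h' | h'
          · omega
          · have := Y_alpha _ h'; omega
        obtain ⟨hG, ht⟩ := unique_match hshape hcount.1 hnotmem
        subst ht
        exact ⟨[], w', rfl, by simpa using hG, by simpa using hH⟩

lemma rsync : ∀ (u v s : List ℕ), s ≠ [] → s <:+ phiW u → s <:+ phiW v →
    ∃ r, 1 ≤ r ∧ r ≤ u.length ∧ r ≤ v.length ∧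
      u.drop (u.length - r) = v.drop (v.length - r) ∧
      s.length ≤ (phiW (v.drop (v.length - r))).length := by
  intro u
  induction u using List.reverseRecOn with
  | nil =>
    intro v s hs hsu _
    rw [phiW_nil, List.suffix_nil] at hsu
    exact absurd hsu hs
  | append_singleton u' cu ih =>
    intro v s hs hsu hsv
    have hvne : v ≠ [] := by
      rintro rfl
      rw [phiW_nil, List.suffix_nil] at hsv
      exact hs hsv
    obtain ⟨v', cv, rfl⟩ : ∃ v' cv, v = v' ++ [cv] := by
      rcases List.eq_nil_or_concat v with rfl | ⟨v', cv, h⟩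
      · exact absurd rfl hvne
      · exact ⟨v', cv, by simpa using h⟩
    obtain ⟨s₀u, hs0u, _⟩ := suffix_concat_ne ((phiW_concat u' cu) ▸ hsu) hs
    obtain ⟨s₀v, hs0v, _⟩ := suffix_concat_ne ((phiW_concat v' cv) ▸ hsv) hs
    have hcc : cu = cv := by
      have := ends_eq ((hs0u ▸ hs0v : s₀u ++ [cu+1] = s₀v ++ [cv+1]))
      omega
    subst hcc
    by_cases hlen : s.length ≤ (phi cu).length
    · have h2 : (v' ++ [cu]).drop ((v' ++ [cu]).length - 1) = [cu] := by
        have : (v' ++ [cu]).length - 1 = v'.length := by simp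
        rw [this, List.drop_left]
      have h1 : (u' ++ [cu]).drop ((u' ++ [cu]).length - 1) = [cu] := by
        have : (u' ++ [cu]).length - 1 = u'.length := by simp
        rw [this, List.drop_left]
      refine ⟨1, le_rfl, by simp, by simp, ?_, ?_⟩
      · rw [h1, h2]
      · rw [h2, phiW_singleton]; exact hlen
    · push_neg at hlen
      have hsu' : s <:+ phiW u' ++ phi cu := by
        rw [phiW_append, phiW_singleton] at hsu; exact hsu
      have hsv' : s <:+ phiW v' ++ phi cu := by
        rw [phiW_append, phiW_singleton] at hsv; exact hsv
      obtain ⟨s₁, hs1, hs1u⟩ := suffix_split hsu' (le_of_lt hlen)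
      obtain ⟨s₂, hs2, hs2v⟩ := suffix_split hsv' (le_of_lt hlen)
      have hs12 : s₁ = s₂ := List.append_cancel_right (hs1 ▸ hs2)
      subst hs12
      have hs1ne : s₁ ≠ [] := by
        rintro rfl
        simp at hs1
        rw [hs1] at hlen
        omega
      obtain ⟨r, hr1, hru, hrv, heq, hsum⟩ := ih v' s₁ hs1ne hs1u hs2v
      refine ⟨r + 1, by omega, by simp; omega, by simp; omega, ?_, ?_⟩
      · have e1 : (u' ++ [cu]).length - (r + 1) = u'.length - r := by simp
        have e2 : (v' ++ [cu]).length - (r + 1) = v'.length - r := by simp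
        rw [e1, e2, List.drop_append_of_le_length (by omega),
          List.drop_append_of_le_length (by omega), heq]
      · have e2 : (v' ++ [cu]).length - (r + 1) = v'.length - r := by simp
        rw [e2, List.drop_append_of_le_length (by omega), phiW_append, phiW_singleton]
        have hslen : s.length = s₁.length + (phi cu).length := by
          rw [hs1]; simp
        simp only [List.length_append]
        omega

lemma lsync : ∀ (u v s : List ℕ), s ≠ [] → s <+: phiW u → s <+: phiW v →
    ∃ r, 1 ≤ r ∧ r ≤ u.length ∧ r ≤ v.length ∧
      u.take r = v.take r ∧
      s.length ≤ (phiW (v.take r)).length := by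
  intro u
  induction u with
  | nil =>
    intro v s hs hsu _
    rw [phiW_nil, List.prefix_nil] at hsu
    exact absurd hsu hs
  | cons cu u' ih =>
    intro v s hs hsu hsv
    have hvne : v ≠ [] := by
      rintro rfl
      rw [phiW_nil, List.prefix_nil] at hsv
      exact hs hsv
    obtain ⟨cv, v', rfl⟩ : ∃ cv v', v = cv :: v' := by
      cases v with
      | nil => exact absurd rfl hvne
      | cons cv v' => exact ⟨cv, v', rfl⟩
    obtain ⟨s₀u, hs0u, _⟩ := prefix_cons_ne ((phiW_head_cons cu u') ▸ hsu) hs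
    obtain ⟨s₀v, hs0v, _⟩ := prefix_cons_ne ((phiW_head_cons cv v') ▸ hsv) hs
    have hcc : cu = cv := by
      have := hs0u ▸ hs0v
      exact (List.cons.injEq _ _ _ _ ▸ this).1
    subst hcc
    by_cases hlen : s.length ≤ (phi cu).length
    · refine ⟨1, le_rfl, by simp, by simp, by simp, ?_⟩
      simp only [List.take_succ_cons, List.take_zero]
      rw [phiW_singleton]
      exact hlen
    · push_neg at hlen
      have hsu' : s <+: phi cu ++ phiW u' := by rw [← phiW_cons]; exact hsu
      have hsv' : s <+: phi cu ++ phiW v' := by rw [← phiW_cons]; exact hsv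
      obtain ⟨s₁, hs1, hs1u⟩ := prefix_split hsu' (le_of_lt hlen)
      obtain ⟨s₂, hs2, hs2v⟩ := prefix_split hsv' (le_of_lt hlen)
      have hs12 : s₁ = s₂ := List.append_cancel_left (hs1 ▸ hs2)
      subst hs12
      have hs1ne : s₁ ≠ [] := by
        rintro rfl
        simp at hs1
        rw [hs1] at hlen
        omega
      obtain ⟨r, hr1, hru, hrv, heq, hsum⟩ := ih v' s₁ hs1ne hs1u hs2v
      refine ⟨r + 1, by omega, by simp; omega, by simp; omega, ?_, ?_⟩
      · simp only [List.take_succ_cons]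
        rw [heq]
      · simp only [List.take_succ_cons]
        rw [phiW_cons]
        have hslen : s.length = (phi cu).length + s₁.length := by
          rw [hs1]; simp
        simp only [List.length_append]
        omega

/-! ### peeling -/

lemma peel_left {b : ℕ} {w' L O R : List ℕ} (h : phi b ++ phiW w' = L ++ O ++ R)
    (hL : (phi b).length ≤ L.length) :
    ∃ L', L = phi b ++ L' ∧ phiW w' = L' ++ O ++ R := by
  have hLfull : L <+: phi b ++ phiW w' := by
    rw [h, List.append_assoc]
    exact List.prefix_append _ _
  have hp : phi b <+: L :=
    List.prefix_of_prefix_length_le (List.prefix_append _ _) hLfull hL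
  obtain ⟨L', rfl⟩ := hp
  refine ⟨L', rfl, ?_⟩
  rw [List.append_assoc, List.append_assoc] at h
  have := List.append_cancel_left h
  rw [this, List.append_assoc]

lemma peel_right {b : ℕ} {w' L O R : List ℕ} (h : phiW w' ++ phi b = L ++ O ++ R)
    (hR : (phi b).length ≤ R.length) :
    ∃ R', R = R' ++ phi b ∧ phiW w' = L ++ O ++ R' := by
  have hRfull : R <:+ phiW w' ++ phi b := by
    rw [h]
    exact List.suffix_append _ _
  have hp : phi b <:+ R :=
    List.suffix_of_suffix_length_le (List.suffix_append _ _) hRfull hR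
  obtain ⟨R', rfl⟩ := hp
  refine ⟨R', rfl, ?_⟩
  rw [← List.append_assoc] at h
  have := List.append_cancel_right h
  rw [this]

end PhiOF
namespace PhiOF
open List

lemma mem_phiW {x : ℕ} {u : List ℕ} : x ∈ phiW u ↔ ∃ b ∈ u, x ∈ phi b := by
  simp [phiW, applyM]

lemma phiW_length_take_lt {z : List ℕ} {d : ℕ} (h : d < z.length) :
    (phiW (z.take d)).length < (phiW z).length := by
  conv_rhs => rw [← List.take_append_drop d z]
  rw [phiW_append, List.length_append]
  have hne : z.drop d ≠ [] := by
    intro hc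
    have := congrArg List.length hc
    simp at this
    omega
  have := List.length_pos_of_ne_nil (phiW_ne hne)
  omega

lemma take_eq_all {z : List ℕ} {dl : ℕ} (hdl : dl ≤ z.length)
    (h : (phiW z).length ≤ (phiW (z.take dl)).length) : z.take dl = z := by
  rcases eq_or_lt_of_le hdl with heq | hlt
  · rw [heq]
    exact List.take_length ..
  · exfalso
    have := phiW_length_take_lt hlt
    omega

lemma cover {z : List ℕ} {r dl : ℕ} (hr : r ≤ z.length) (hdl : dl ≤ z.length)
    (hsum : (phiW z).length + 1 ≤
      (phiW (z.drop (z.length - r))).length + (phiW (z.take dl)).length) :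
    z.length + 1 ≤ r + dl := by
  by_contra hc
  push_neg at hc
  have hrd : r + dl ≤ z.length := by omega
  have h1 : z.drop (z.length - r) = (z.drop dl).drop (z.length - r - dl) := by
    rw [List.drop_drop]
    congr 1
    omega
  have h2 : (phiW z).length = (phiW (z.take dl)).length + (phiW (z.drop dl)).length := by
    conv_lhs => rw [← List.take_append_drop dl z]
    rw [phiW_append, List.length_append]
  have h3 : (phiW (z.drop dl)).length =
      (phiW ((z.drop dl).take (z.length - r - dl))).length +
      (phiW (z.drop (z.length - r))).length := by
    conv_lhs => rw [← List.take_append_drop (z.length - r - dl) (z.drop dl)]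
    rw [phiW_append, List.length_append, h1]
  omega

lemma period_overlap {z : List ℕ} {r dl : ℕ} (h1 : 1 ≤ r) (hr : r ≤ z.length)
    (hdl : dl ≤ z.length) (hsum : z.length + 1 ≤ r + dl) :
    ∃ a x, ([a] ++ x ++ [a] ++ x ++ [a]) <+: z.drop (z.length - r) ++ z ++ z.take dl := by
  set m := z.length - r with hm
  set T := z.take m with hT
  set D := z.drop m with hD
  have hz : z = T ++ D := (List.take_append_drop m z).symm
  have hdm : D.length = r := by rw [hD, List.length_drop]; omega
  obtain ⟨A, ξ₀, hA⟩ : ∃ A ξ₀, D = A :: ξ₀ := by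
    cases hcase : D with
    | nil => rw [hcase] at hdm; simp at hdm; omega
    | cons A ξ₀ => exact ⟨A, ξ₀, rfl⟩
  have hmdl : m + 1 ≤ dl := by omega
  have htk : z.take dl = T ++ D.take (dl - m) := by
    rw [hT, hD, ← List.take_add]
    congr 1
    omega
  have hg : D.take (dl - m) = A :: ξ₀.take (dl - m - 1) := by
    rw [hA, show dl - m = (dl - m - 1) + 1 from by omega, List.take_succ_cons]
    congr 2 <;> omega
  refine ⟨A, ξ₀ ++ T, ⟨ξ₀.take (dl - m - 1), ?_⟩⟩
  calc ([A] ++ (ξ₀ ++ T) ++ [A] ++ (ξ₀ ++ T) ++ [A]) ++ ξ₀.take (dl - m - 1)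
      = (A :: ξ₀ ++ T) ++ ((A :: ξ₀ ++ T) ++ (A :: ξ₀.take (dl - m - 1))) := by
        simp [List.append_assoc]
    _ = D ++ (z ++ z.take dl) := by
        rw [← hA, ← hg, htk]
        conv_rhs => rw [hz]
        simp [List.append_assoc]
    _ = D ++ z ++ z.take dl := by rw [List.append_assoc]
    _ = z.drop (z.length - r) ++ z ++ z.take dl := by rw [hD]

lemma phi_struct {K : ℕ} (hK : 1 ≤ K) :
    ∃ D E, phi K = [K] ++ D ++ [0, K] ++ E ++ [K + 1] ∧ K ∉ D ∧ K ∉ E := by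
  obtain ⟨c, rfl⟩ : ∃ c, K = c + 1 := ⟨K - 1, by omega⟩
  obtain ⟨P₁, P₂, hY, hP1, hP2⟩ := count_one_split (count_Y c)
  obtain ⟨Z, hZ⟩ := Y_eq0 c
  have hnotin : ∀ u : List ℕ, (∀ b ∈ u, b ∈ P₁ ∨ b ∈ P₂) → (c + 1) ∉ phiW u := by
    intro u hu hc
    obtain ⟨b, hb, hmem⟩ := mem_phiW.1 hc
    have h1 := phi_alpha _ hmem
    have hbY : b ∈ Y c := by
      rw [hY]
      rcases hu b hb with h | h
      · exact List.mem_append.2 (Or.inl h)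
      · exact List.mem_append.2 (Or.inr (List.mem_cons_of_mem _ h))
    have h2 := Y_alpha _ hbY
    have hbc : b = c := by omega
    subst hbc
    rcases hu b hb with h | h
    · exact hP1 h
    · exact hP2 h
  have hphic : phi c = c :: (Z ++ [0] ++ [c + 1]) := by
    rw [phi_eq c, hZ]
  refine ⟨phiW P₁ ++ c :: Z, phiW P₂ ++ c :: Y c, ?_, ?_, ?_⟩
  · have e1 : phiW (Y c) = phiW P₁ ++ (c :: (Z ++ [0] ++ [c + 1])) ++ phiW P₂ := by
      rw [hY, phiW_append, phiW_cons, hphic]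
      exact (List.append_assoc _ _ _).symm
    rw [phi_eq (c + 1), Y_succ c, e1]
    simp [List.append_assoc]
  · intro hc
    rcases List.mem_append.1 hc with h | h
    · exact hnotin P₁ (fun b hb => Or.inl hb) h
    · rcases List.mem_cons.1 h with h' | h'
      · omega
      · have : (c+1) ∈ Y c := by rw [hZ]; exact List.mem_append.2 (Or.inl h')
        have := Y_alpha _ this
        omega
  · intro hc
    rcases List.mem_append.1 hc with h | h
    · exact hnotin P₂ (fun b hb => Or.inr hb) h
    · rcases List.mem_cons.1 h with h' | h'
      · omega
      · have := Y_alpha _ h'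
        omega

lemma of_infix {v w : List ℕ} (h : OverlapFree w) (hv : v <:+: w) : OverlapFree v :=
  fun a x hc => h a x (hc.trans hv)

end PhiOF
namespace PhiOF
open List

lemma split_point {A B cpre d : List ℕ} {K : ℕ} (h : A ++ B = cpre ++ K :: d) :
    (∃ d₁, A = cpre ++ K :: d₁ ∧ d = d₁ ++ B) ∨ (∃ c₂, cpre = A ++ c₂ ∧ B = c₂ ++ K :: d) := by
  rcases List.append_eq_append_iff.1 h with ⟨a', ha1, ha2⟩ | ⟨c', hc1, hc2⟩
  · exact Or.inr ⟨a', ha1, ha2⟩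
  · cases c' with
    | nil => exact Or.inr ⟨[], by simpa using hc1.symm, by simpa using hc2.symm⟩
    | cons k₀ d₁ =>
      have h1 : K :: d = k₀ :: (d₁ ++ B) := by simpa using hc2
      have hk : K = k₀ := (List.cons.injEq _ _ _ _ ▸ h1).1
      have hd : d = d₁ ++ B := (List.cons.injEq _ _ _ _ ▸ h1).2
      exact Or.inl ⟨d₁, by rw [hc1, hk], hd⟩

lemma five_split {a K : ℕ} {x cpre d : List ℕ}
    (h : [a] ++ x ++ [a] ++ x ++ [a] = cpre ++ K :: d) :
    (cpre = [] ∧ K = a ∧ d = x ++ [a] ++ x ++ [a]) ∨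
    (∃ x₁ x₂, x = x₁ ++ K :: x₂ ∧ cpre = [a] ++ x₁ ∧ d = x₂ ++ [a] ++ x ++ [a]) ∨
    (cpre = [a] ++ x ∧ K = a ∧ d = x ++ [a]) ∨
    (∃ x₁ x₂, x = x₁ ++ K :: x₂ ∧ cpre = [a] ++ x ++ [a] ++ x₁ ∧ d = x₂ ++ [a]) ∨
    (cpre = [a] ++ x ++ [a] ++ x ∧ K = a ∧ d = []) := by
  have h0 : [a] ++ (x ++ [a] ++ x ++ [a]) = cpre ++ K :: d := by
    simpa [List.append_assoc] using h
  rcases split_point h0 with ⟨d₁, hA, hd⟩ | ⟨c₂, hc, hB⟩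
  · have hlen := congrArg List.length hA
    simp at hlen
    have hcpre : cpre = [] := List.eq_nil_of_length_eq_zero (by omega)
    have hd₁ : d₁ = [] := List.eq_nil_of_length_eq_zero (by omega)
    subst hcpre hd₁
    simp at hA
    exact Or.inl ⟨rfl, hA.symm, by rw [hd]; simp [List.append_assoc]⟩
  · have hB' : x ++ ([a] ++ x ++ [a]) = c₂ ++ K :: d := by
      simpa [List.append_assoc] using hB
    rcases split_point hB' with ⟨d₁, hA, hd⟩ | ⟨c₃, hc3, hB1⟩
    · exact Or.inr (Or.inl ⟨c₂, d₁, hA, by rw [hc],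
        by rw [hd]; simp [List.append_assoc]⟩)
    · have hB1' : [a] ++ (x ++ [a]) = c₃ ++ K :: d := by
        simpa [List.append_assoc] using hB1
      rcases split_point hB1' with ⟨d₁, hA, hd⟩ | ⟨c₄, hc4, hB2⟩
      · have hlen := congrArg List.length hA
        simp at hlen
        have hc₃ : c₃ = [] := List.eq_nil_of_length_eq_zero (by omega)
        have hd₁ : d₁ = [] := List.eq_nil_of_length_eq_zero (by omega)
        subst hc₃ hd₁
        simp at hA
        refine Or.inr (Or.inr (Or.inl ⟨?_, hA.symm, by simpa using hd⟩))
        rw [hc, hc3]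
        simp
      · rcases split_point hB2 with ⟨d₁, hA, hd⟩ | ⟨c₅, hc5, hB3⟩
        · refine Or.inr (Or.inr (Or.inr (Or.inl ⟨c₄, d₁, hA, ?_, hd⟩)))
          rw [hc, hc3, hc4]
          simp [List.append_assoc]
        · have hlen := congrArg List.length hB3
          simp at hlen
          have hc₅ : c₅ = [] := List.eq_nil_of_length_eq_zero (by omega)
          have hdn : d = [] := List.eq_nil_of_length_eq_zero (by omega)
          subst hc₅ hdn
          simp at hB3
          refine Or.inr (Or.inr (Or.inr (Or.inr ⟨?_, hB3.symm, rfl⟩)))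
          rw [hc, hc3, hc4, hc5]
          simp [List.append_assoc]

lemma caseB1 {v L R x : List ℕ} {n a : ℕ}
    (hv : phiW v = L ++ ([a] ++ x ++ [a] ++ x ++ [a]) ++ R)
    (halpha : ∀ c ∈ v, c ≤ n)
    (hmem : (n + 1) ∈ [a] ++ x ++ [a] ++ x ++ [a])
    (hOF : OverlapFree v) : False := by
  have hmem' : n + 1 = a ∨ (n + 1) ∈ x := by
    simp only [List.mem_append, List.mem_singleton, List.mem_cons] at hmem
    tauto
  rcases hmem' with ha | hx
  · subst ha
    have hv1 : phiW v = L ++ (n + 1) :: (x ++ (n + 1) :: (x ++ (n + 1) :: R)) := by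
      rw [hv]; simp [List.append_assoc]
    obtain ⟨u₁, rest₁, hveq, hL1, hH1⟩ := sync halpha hv1
    have halpha1 : ∀ c ∈ rest₁, c ≤ n := fun c hc => halpha c (by rw [hveq]; simp [hc])
    have hv2 : phiW rest₁ = x ++ (n + 1) :: (x ++ (n + 1) :: R) := hH1.symm
    obtain ⟨z, rest₂, hr1eq, hx1, hH2⟩ := sync halpha1 hv2
    have hz' : phiW (z ++ [n]) = x ++ [n + 1] := by
      rw [phiW_append, phiW_singleton, phi_eq, hx1]
      simp [List.append_assoc]
    have hpre1 : phiW (z ++ [n]) <+: phiW rest₂ := by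
      refine ⟨R, ?_⟩
      rw [hz', ← hH2]
      simp [List.append_assoc]
    have hzne : (z ++ [n] : List ℕ) ≠ [] := by simp
    obtain ⟨dl, hdl1, hdlz, hdlr, htk, hSg⟩ :=
      lsync (z ++ [n]) rest₂ (phiW (z ++ [n])) (phiW_ne hzne) (List.prefix_refl _) hpre1
    rw [← htk] at hSg
    have hall : rest₂.take dl = z ++ [n] := by
      rw [← htk]
      exact take_eq_all hdlz hSg
    have hrest₂ : rest₂ = (z ++ [n]) ++ rest₂.drop dl := by
      conv_lhs => rw [← List.take_append_drop dl rest₂]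
      rw [hall]
    apply hOF n z
    refine ⟨u₁, rest₂.drop dl, ?_⟩
    rw [hveq, hr1eq]
    conv_rhs => rw [hrest₂]
    simp [List.append_assoc]
  · obtain ⟨x₁, x₂, hxeq⟩ := List.append_of_mem hx
    have hv1 : phiW v =
        (L ++ a :: x₁) ++ (n + 1) :: (x₂ ++ a :: x₁ ++ (n + 1) :: (x₂ ++ a :: R)) := by
      rw [hv, hxeq]; simp [List.append_assoc]
    obtain ⟨u₁, rest₁, hveq, hG1, hH1⟩ := sync halpha hv1
    have halpha1 : ∀ c ∈ rest₁, c ≤ n := fun c hc => halpha c (by rw [hveq]; simp [hc])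
    have hv2 : phiW rest₁ = (x₂ ++ a :: x₁) ++ (n + 1) :: (x₂ ++ a :: R) := by
      rw [← hH1]
    obtain ⟨z, w₃, hr1eq, hG2, hH2⟩ := sync halpha1 hv2
    have hu : phiW (u₁ ++ [n]) = L ++ (a :: x₁ ++ [n + 1]) := by
      calc phiW (u₁ ++ [n]) = (phiW u₁ ++ n :: Y n) ++ [n + 1] := by
            rw [phiW_append, phiW_singleton, phi_eq]; simp [List.append_assoc]
        _ = L ++ (a :: x₁ ++ [n + 1]) := by rw [← hG1]; simp [List.append_assoc]
    have hz' : phiW (z ++ [n]) = x₂ ++ (a :: x₁ ++ [n + 1]) := by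
      calc phiW (z ++ [n]) = (phiW z ++ n :: Y n) ++ [n + 1] := by
            rw [phiW_append, phiW_singleton, phi_eq]; simp [List.append_assoc]
        _ = x₂ ++ (a :: x₁ ++ [n + 1]) := by rw [← hG2]; simp [List.append_assoc]
    have hsne : (a :: x₁ ++ [n + 1] : List ℕ) ≠ [] := by simp
    obtain ⟨r, hr1, hru, hrz, hdropeq, hSgr⟩ :=
      rsync (u₁ ++ [n]) (z ++ [n]) (a :: x₁ ++ [n + 1]) hsne ⟨L, hu.symm⟩ ⟨x₂, hz'.symm⟩
    have hs'ne : (x₂ ++ [a] : List ℕ) ≠ [] := by simp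
    have hs'w : (x₂ ++ [a]) <+: phiW w₃ := by
      refine ⟨R, ?_⟩
      rw [← hH2]; simp [List.append_assoc]
    have hs'z : (x₂ ++ [a]) <+: phiW (z ++ [n]) := by
      refine ⟨x₁ ++ [n + 1], ?_⟩
      rw [hz']; simp [List.append_assoc]
    obtain ⟨dl, hdl1, hdlw, hdlz, htkeq, hSgd⟩ := lsync w₃ (z ++ [n]) (x₂ ++ [a]) hs'ne hs'w hs'z
    have hlz' : (phiW (z ++ [n])).length = x₂.length + (x₁.length + 2) := by
      rw [hz']; simp
    have hls : (a :: x₁ ++ [n + 1] : List ℕ).length = x₁.length + 2 := by simp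
    have hls' : (x₂ ++ [a] : List ℕ).length = x₂.length + 1 := by simp
    have hsum : (z ++ [n]).length + 1 ≤ r + dl := by
      apply cover hrz hdlz
      omega
    obtain ⟨a', x', hpref⟩ := period_overlap hr1 hrz hdlz hsum
    have hvdecomp : v = (u₁ ++ [n]) ++ ((z ++ [n]) ++ w₃) := by
      rw [hveq, hr1eq]; simp [List.append_assoc]
    have hbig : (u₁ ++ [n]).take ((u₁ ++ [n]).length - r) ++
        ((z ++ [n]).drop ((z ++ [n]).length - r) ++ (z ++ [n]) ++ (z ++ [n]).take dl) ++
        w₃.drop dl = (u₁ ++ [n]) ++ ((z ++ [n]) ++ w₃) := by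
      rw [← hdropeq, ← htkeq]
      conv_rhs => rw [← List.take_append_drop ((u₁ ++ [n]).length - r) (u₁ ++ [n]),
        ← List.take_append_drop dl w₃]
      simp only [List.append_assoc, List.length_append, List.length_singleton]
    exact hOF a' x' (hpref.isInfix.trans ⟨(u₁ ++ [n]).take ((u₁ ++ [n]).length - r),
      w₃.drop dl, by rw [hbig, ← hvdecomp]⟩)

lemma caseB2 {v' L R cpre d x : List ℕ} {K a : ℕ}
    (hsplit : [a] ++ x ++ [a] ++ x ++ [a] = cpre ++ K :: d)
    (hL : phiW v' = L ++ cpre)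
    (hd : d ++ R = Y K ++ [K + 1])
    (hv'ne : v' ≠ [])
    (halpha : ∀ c ∈ v', c ≤ K - 1)
    (hK1 : 1 ≤ K) : False := by
  obtain ⟨n, rfl⟩ : ∃ n, K = n + 1 := ⟨K - 1, by omega⟩
  have halpha' : ∀ c ∈ v', c ≤ n := fun c hc => by have := halpha c hc; omega
  obtain ⟨D, E, hPK, hKD, hKE⟩ := phi_struct hK1
  have htail : Y (n + 1) ++ [n + 1 + 1] = D ++ [0, n + 1] ++ E ++ [n + 1 + 1] := by
    have h1 : phi (n + 1) = (n + 1) :: (Y (n + 1) ++ [n + 1 + 1]) := phi_eq (n + 1)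
    have h2 : phi (n + 1) = (n + 1) :: (D ++ [0, n + 1] ++ E ++ [n + 1 + 1]) := by
      rw [hPK]; simp [List.append_assoc]
    rw [h1] at h2
    exact (List.cons.injEq _ _ _ _ ▸ h2).2
  have hcW : (Y (n + 1) ++ [n + 1 + 1]).count (n + 1) = 1 := by
    rw [htail]
    rw [List.count_append, List.count_append, List.count_append]
    rw [List.count_eq_zero.2 hKD, List.count_eq_zero.2 hKE]
    simp
  have hWshape : Y (n + 1) ++ [n + 1 + 1] = (D ++ [0]) ++ (n + 1) :: (E ++ [n + 1 + 1]) := by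
    rw [htail]
    simp [List.append_assoc]
  have hC0 : (n + 1) ∉ D ++ [0] := by
    intro hcon
    rcases List.mem_append.1 hcon with h' | h'
    · exact hKD h'
    · simp at h'
  obtain ⟨Z₀, hZ₀⟩ := Y_eq0 n
  rcases five_split hsplit with ⟨hc, hK, hdv⟩ | ⟨x₁, x₂, hxeq, hc, hdv⟩ |
      ⟨hc, hK, hdv⟩ | ⟨x₁, x₂, hxeq, hc, hdv⟩ | ⟨hc, hK, hdv⟩
  · -- case 1
    subst hK
    have h2 : 2 ≤ (Y (n + 1) ++ [n + 1 + 1]).count (n + 1) := by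
      rw [← hd, hdv]
      simp [List.count_append]
      omega
    omega
  · -- case 2
    have hdR : (x₂ ++ [a] ++ x₁) ++ (n + 1) :: (x₂ ++ [a] ++ R) = Y (n + 1) ++ [n + 1 + 1] := by
      rw [← hd, hdv, hxeq]
      simp [List.append_assoc]
    have hnm := count_split_zero hdR.symm hcW
    have hum := unique_match (hdR.trans hWshape) hnm.1 hC0
    have hmatch : x₂ ++ [a] ++ x₁ = D ++ [0] := hum.1
    rcases List.eq_nil_or_concat x₁ with rfl | ⟨x₁', ℓ, hx₁⟩
    · have hmatch' : (x₂ ++ [a]) = D ++ [0] := by simpa using hmatch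
      have ha : a = 0 := ends_eq hmatch'
      apply phiW_not_ends_zero hv'ne (Z := L)
      rw [hL, hc, ha]
      simp
    · rw [List.concat_eq_append] at hx₁
      rw [hx₁] at hmatch
      have hℓ : ℓ = 0 := by
        apply ends_eq (A := x₂ ++ [a] ++ x₁') (B := D)
        rw [← hmatch]
        simp [List.append_assoc]
      apply phiW_not_ends_zero hv'ne (Z := L ++ a :: x₁')
      rw [hL, hc, hx₁, hℓ]
      simp [List.append_assoc]
  · -- case 3
    subst hK
    have hdR : x ++ (n + 1) :: R = Y (n + 1) ++ [n + 1 + 1] := by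
      rw [← hd, hdv]
      simp [List.append_assoc]
    have hnm := count_split_zero hdR.symm hcW
    have hum := unique_match (hdR.trans hWshape) hnm.1 hC0
    have hxD : x = D ++ [0] := hum.1
    have hv'shape : phiW v' = L ++ (n + 1) :: x := by rw [hL, hc]; simp
    obtain ⟨u₁, u₂, hv'eq, hLeq, hxeq2⟩ := sync halpha' hv'shape
    have hu₂ne : u₂ ≠ [] := by
      rintro rfl
      rw [phiW_nil] at hxeq2
      rw [hxeq2] at hxD
      simp at hxD
    exact phiW_not_ends_zero hu₂ne (by rw [← hxeq2, hxD])
  · -- case 4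
    have hcpre : phiW v' = (L ++ a :: x₁) ++ (n + 1) :: (x₂ ++ [a] ++ x₁) := by
      rw [hL, hc, hxeq]
      simp [List.append_assoc]
    obtain ⟨u₁, u₂, hv'eq, hGeq, hxeq2⟩ := sync halpha' hcpre
    rcases List.eq_nil_or_concat x₁ with rfl | ⟨x₁', ℓ, hx₁⟩
    · have ha : a = 0 := by
        apply ends_eq (A := L) (B := phiW u₁ ++ n :: Z₀)
        rw [hZ₀] at hGeq
        simpa [List.append_assoc] using hGeq
      apply phiW_not_ends_zero hv'ne (Z := L ++ a :: x)
      rw [hL, hc, ha]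
      simp [List.append_assoc]
    · rw [List.concat_eq_append] at hx₁
      have hℓ : ℓ = 0 := by
        apply ends_eq (A := L ++ a :: x₁') (B := phiW u₁ ++ n :: Z₀)
        rw [hZ₀, hx₁] at hGeq
        simpa [List.append_assoc] using hGeq
      apply phiW_not_ends_zero hv'ne (Z := L ++ a :: x ++ a :: x₁')
      rw [hL, hc, hx₁, hℓ]
      simp [List.append_assoc]
  · -- case 5
    subst hK
    rcases List.eq_nil_or_concat x with rfl | ⟨x', ℓ, hx⟩
    · have hshape : phiW v' = (L ++ [n + 1]) ++ (n + 1) :: ([] : List ℕ) := by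
        rw [hL, hc]
        simp
      obtain ⟨u₁, u₂, hv'eq, hGeq, _⟩ := sync halpha' hshape
      rw [hZ₀] at hGeq
      have hcontra : n + 1 = 0 := by
        apply ends_eq (A := L) (B := phiW u₁ ++ n :: Z₀)
        simpa [List.append_assoc] using hGeq
      omega
    · rw [List.concat_eq_append] at hx
      have hshape : phiW v' = (L ++ (n + 1) :: x) ++ (n + 1) :: x := by
        rw [hL, hc]
        simp [List.append_assoc]
      obtain ⟨u₁, u₂, hv'eq, hGeq, hxeq2⟩ := sync halpha' hshape
      rw [hZ₀, hx] at hGeq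
      have hℓ : ℓ = 0 := by
        apply ends_eq (A := L ++ (n + 1) :: x') (B := phiW u₁ ++ n :: Z₀)
        simpa [List.append_assoc] using hGeq
      have hu₂ne : u₂ ≠ [] := by
        rintro rfl
        rw [phiW_nil] at hxeq2
        rw [hxeq2] at hx
        simp at hx
      exact phiW_not_ends_zero hu₂ne (Z := x') (by rw [← hxeq2, hx, hℓ])

end PhiOF
namespace PhiOF
open List

lemma phi_length (c : ℕ) : (phi c).length = (Y c).length + 2 := by
  rw [phi_eq]; simp

lemma phi_head_le {b c : ℕ} {w₀ α γ : List ℕ} (h : b :: w₀ = α ++ c :: γ) :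
    (phi b).length ≤ (phiW (α ++ [c])).length := by
  cases α with
  | nil =>
    have hb : b = c := by
      have h' : b :: w₀ = c :: γ := by simpa using h
      exact (List.cons.injEq _ _ _ _ ▸ h').1
    rw [hb]
    simp [phiW_singleton]
  | cons a₀ α' =>
    have hb : b = a₀ := by
      have h' : b :: w₀ = a₀ :: (α' ++ c :: γ) := by simpa using h
      exact (List.cons.injEq _ _ _ _ ▸ h').1
    rw [hb, show ((a₀ :: α') ++ [c] : List ℕ) = a₀ :: (α' ++ [c]) from by simp,
      phiW_cons]
    simp

lemma phi_last_le (γ : List ℕ) (b : ℕ) : (phi b).length ≤ (phiW (γ ++ [b])).length := by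
  rw [phiW_append, phiW_singleton]
  simp

lemma of_short {w : List ℕ} (h : w.length ≤ 2) : OverlapFree w := by
  intro a x hinf
  have := hinf.length_le
  simp at this
  omega

theorem main_aux (n : ℕ)
    (IHn : ∀ m, m < n → ∀ w, OverlapFree w → (∀ c ∈ w, c ≤ m) → OverlapFree (phiW w)) :
    ∀ N (w : List ℕ), w.length ≤ N → OverlapFree w → (∀ c ∈ w, c ≤ n) →
      OverlapFree (phiW w) := by
  have hOFF : ∀ j, j ≤ n → OverlapFree (F j) := by
    intro j
    induction j with
    | zero => exact fun _ => of_short (by simp [F])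
    | succ j ihj =>
      intro hj
      rw [F_succ]
      exact IHn j (by omega) (F j) (ihj (by omega)) F_alpha
  intro N
  induction N with
  | zero =>
    intro w hlen _ _
    have hwnil : w = [] := List.eq_nil_of_length_eq_zero (by omega)
    subst hwnil
    exact of_short (by simp)
  | succ N IHN =>
    intro w hlen hOFw halpha a x hinf
    obtain ⟨L, R, hLR⟩ := hinf
    cases w with
    | nil =>
      rw [phiW_nil] at hLR
      have := congrArg List.length hLR
      simp at this
    | cons b w' =>
      have hv : phi b ++ phiW w' = L ++ ([a] ++ x ++ [a] ++ x ++ [a]) ++ R := by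
        rw [← phiW_cons, hLR]
      by_cases hpL : (phi b).length ≤ L.length
      · obtain ⟨L', hL', hw'⟩ := peel_left hv hpL
        exact IHN w' (by simp at hlen ⊢; omega)
          (of_infix hOFw ⟨[b], [], by simp⟩)
          (fun c hc => halpha c (List.mem_cons_of_mem _ hc)) a x ⟨L', R, hw'.symm⟩
      · push_neg at hpL
        obtain ⟨w'', bm, hw2⟩ : ∃ w'' bm, b :: w' = w'' ++ [bm] := by
          rcases List.eq_nil_or_concat (b :: w') with h | ⟨w'', bm, h⟩
          · simp at h
          · exact ⟨w'', bm, by rw [h, List.concat_eq_append]⟩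
        have hv2 : phiW w'' ++ phi bm = L ++ ([a] ++ x ++ [a] ++ x ++ [a]) ++ R := by
          rw [← phiW_singleton, ← phiW_append, ← hw2, phiW_cons, hv]
        by_cases hpR : (phi bm).length ≤ R.length
        · obtain ⟨R', hR', hw''⟩ := peel_right hv2 hpR
          exact IHN w'' (by
              have := congrArg List.length hw2
              simp at this ⊢
              simp at hlen
              omega)
            (of_infix hOFw ⟨[], [bm], by simpa using hw2.symm⟩)
            (fun c hc => halpha c (by rw [hw2]; exact List.mem_append.2 (Or.inl hc)))
            a x ⟨L, R', hw''.symm⟩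
        · push_neg at hpR
          rcases eq_or_ne w'' [] with rfl | hw''ne
          · -- single block : b :: w' = [bm]
            have hφsp : phi bm = L ++ ([a] ++ x ++ [a] ++ x ++ [a]) ++ R := by
              simpa using hv2
            have hbmw : bm ∈ b :: w' := by rw [hw2]; simp
            rcases List.eq_nil_or_concat R with rfl | ⟨R', rl, hR⟩
            · -- O is a suffix of phi bm : a = bm + 1, count contradiction
              have ha : a = bm + 1 := by
                apply ends_eq (A := L ++ ([a] ++ x ++ [a] ++ x)) (B := bm :: Y bm)
                have := hφsp.symm
                rw [phi_eq] at this
                simpa [List.append_assoc] using this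
              have hcnt := count_phi_top bm
              rw [hφsp] at hcnt
              rw [List.count_append, List.count_append] at hcnt
              have : 3 ≤ (([a] ++ x ++ [a] ++ x ++ [a]).count (bm + 1)) := by
                rw [← ha]
                simp [List.count_append]
                omega
              omega
            · rw [hR, List.concat_eq_append] at hφsp
              have happ : (L ++ ([a] ++ x ++ [a] ++ x ++ [a]) ++ R') ++ [rl] =
                  (bm :: Y bm) ++ [bm + 1] := by
                rw [phi_eq] at hφsp
                simpa [List.append_assoc] using hφsp.symm
              have hmain := (List.append_inj' happ (by simp)).1
              cases L with
              | nil =>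
                have h1 : a :: (x ++ [a] ++ x ++ [a] ++ R') = bm :: Y bm := by
                  simpa [List.append_assoc] using hmain
                have ha : a = bm := (List.cons.injEq _ _ _ _ ▸ h1).1
                have hYeq : x ++ [a] ++ x ++ [a] ++ R' = Y bm :=
                  (List.cons.injEq _ _ _ _ ▸ h1).2
                have hcnt := count_Y bm
                rw [← hYeq] at hcnt
                rw [ha] at hcnt
                simp [List.count_append] at hcnt
                omega
              | cons l₀ L' =>
                have h1 : l₀ :: (L' ++ ([a] ++ x ++ [a] ++ x ++ [a]) ++ R') = bm :: Y bm := by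
                  simpa [List.append_assoc] using hmain
                have hY : L' ++ ([a] ++ x ++ [a] ++ x ++ [a]) ++ R' = Y bm :=
                  (List.cons.injEq _ _ _ _ ▸ h1).2
                cases bm with
                | zero =>
                  have := congrArg List.length hY
                  simp [Y, F] at this
                  omega
                | succ j =>
                  have hjn : j < n := by
                    have := halpha _ hbmw
                    omega
                  have hinf2 : ([a] ++ x ++ [a] ++ x ++ [a]) <:+: phiW (F j) := by
                    refine List.IsInfix.trans ⟨L', R', hY⟩ ?_
                    rw [← F_succ]
                    exact ⟨[], [j + 1], by simpa using (FY (j + 1)).symm⟩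
                  exact IHn j hjn (F j) (hOFF j (by omega)) F_alpha a x hinf2
          · -- at least two blocks
            have hC1 : ∀ c ∈ w'', c + 1 ∈ ([a] ++ x ++ [a] ++ x ++ [a]) := by
              intro c hc
              obtain ⟨α, γ', hsp⟩ := List.append_of_mem hc
              have hw3 : b :: w' = α ++ c :: (γ' ++ [bm]) := by
                rw [hw2, hsp]
                simp [List.append_assoc]
              have hdecomp : phiW (b :: w') =
                  (phiW α ++ c :: Y c) ++ (c + 1) :: phiW (γ' ++ [bm]) := by
                rw [hw3, show (α ++ c :: (γ' ++ [bm]) : List ℕ) =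
                  α ++ [c] ++ (γ' ++ [bm]) from by simp [List.append_assoc]]
                rw [phiW_append, phiW_append, phiW_singleton, phi_eq]
                simp [List.append_assoc]
              have h1len : L.length ≤ (phiW α ++ c :: Y c).length := by
                have h2 := phi_head_le hw3
                rw [phiW_append, phiW_singleton] at h2
                simp only [List.length_append, phi_length] at h2
                rw [phi_length] at hpL
                simp at h2 ⊢
                omega
              have h2len : R.length ≤ (phiW (γ' ++ [bm])).length := by
                have := phi_last_le γ' bm
                omega
              obtain ⟨c₁, d₁, hO, _, _⟩ := split_mid (hLR.trans hdecomp) h1len h2len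
              rw [hO]
              simp
            obtain ⟨K, hKmem, hKmax⟩ := exists_max ([a] ++ x ++ [a] ++ x ++ [a]) (by simp)
            have hK1 : 1 ≤ K := by
              obtain ⟨c₀, hc₀⟩ := List.exists_mem_of_ne_nil w'' hw''ne
              have := hKmax (c₀ + 1) (hC1 c₀ hc₀)
              omega
            have halphaK : ∀ c ∈ w'', c ≤ K - 1 := by
              intro c hc
              have := hKmax (c + 1) (hC1 c hc)
              omega
            have hdecomp2 : phiW (b :: w') = phiW w'' ++ bm :: (Y bm ++ [bm + 1]) := by
              rw [hw2, phiW_append, phiW_singleton, phi_eq]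
            have h1len : L.length ≤ (phiW w'').length := by
              obtain ⟨c₀, w₃, hw''⟩ : ∃ c₀ w₃, w'' = c₀ :: w₃ := by
                cases w'' with
                | nil => exact absurd rfl hw''ne
                | cons c₀ w₃ => exact ⟨c₀, w₃, rfl⟩
              have hb : b = c₀ := by
                rw [hw''] at hw2
                have h' : b :: w' = c₀ :: (w₃ ++ [bm]) := by simpa using hw2
                exact (List.cons.injEq _ _ _ _ ▸ h').1
              rw [hw'', phiW_cons, ← hb]
              simp
              omega
            have h2len : R.length ≤ (Y bm ++ [bm + 1]).length := by
              rw [phi_length] at hpR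
              simp
              omega
            obtain ⟨cpre, d, hOsp, hPsp, hSsp⟩ :=
              split_mid (hLR.trans hdecomp2) h1len h2len
            by_cases hbm : bm = K
            · subst hbm
              exact caseB2 hOsp hPsp hSsp.symm hw''ne halphaK hK1
            · have hbmle : bm ≤ K := by
                apply hKmax
                rw [hOsp]
                simp
              apply caseB1 (n := K - 1) (v := b :: w') (L := L) (R := R) (x := x) (a := a)
              · rw [← hLR]
              · intro c hc
                rw [hw2] at hc
                rcases List.mem_append.1 hc with h | h
                · exact halphaK c h
                · simp at h
                  omega
              · rw [show K - 1 + 1 = K from by omega]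
                exact hKmem
              · exact hOFw

theorem main : ∀ n (w : List ℕ), OverlapFree w → (∀ c ∈ w, c ≤ n) →
    OverlapFree (phiW w) := by
  intro n
  induction n using Nat.strong_induction_on with
  | _ n IHn => exact fun w h1 h2 => main_aux n IHn w.length w le_rfl h1 h2

lemma le_foldr_max (w : List ℕ) : ∀ c ∈ w, c ≤ w.foldr max 0 := by
  induction w with
  | nil => simp
  | cons b w' ih =>
    intro c hc
    rcases List.mem_cons.1 hc with rfl | hc
    · simp only [List.foldr_cons]
      exact le_max_left _ _
    · simp only [List.foldr_cons]
      exact le_trans (ih c hc) (le_max_right _ _)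

end PhiOF

/-- φ is an overlap-free morphism. -/
theorem phi_overlapFree (w : List ℕ) (hw : OverlapFree w) : OverlapFree (phiW w) :=
  PhiOF.main (w.foldr max 0) w hw (PhiOF.le_foldr_max w)
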